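/- Let H be a complex Hilbert space, let A be a norm-closed subalgebra of B(H) possessing a right contractive approximate identity, and let T be the triple system generated by A in B(H). Let C be the norm closure of the linear span of {x y* : x, y ∈ T}. Then C is a norm-closed *-subalgebra (hence a C*-subalgebra) of B(H), T ⊆ C, and c x ∈ T for every c ∈ C and x ∈ T. Consequently T is a norm-closed left ideal of the C*-algebra C containing A as a closed subalgebra. (This is a concrete form of the existence of the left ideal envelope of an operator algebra with r.c.a.i.) -/

import Mathlib

open Filter Topology

local notation "⟪" x ", " y "⟫" => @inner ℂ _ _ x y

/-- If `e` is a contraction, then `‖a e* − a‖² ≤ 2‖a‖‖a e − a‖`. -/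
lemma star_approx {H : Type*} [NormedAddCommGroup H] [InnerProductSpace ℂ H] [CompleteSpace H]
    (a e : H →L[ℂ] H) (he : ‖e‖ ≤ 1) :
    ‖a * star e - a‖ ^ 2 ≤ 2 * ‖a‖ * ‖a * e - a‖ := by
  have hK : (0:ℝ) ≤ 2 * ‖a‖ * ‖a * e - a‖ := by positivity
  have hpt : ∀ ξ : H, ‖(e * star a - star a) ξ‖ ^ 2 ≤ (2 * ‖a‖ * ‖a * e - a‖) * ‖ξ‖ ^ 2 := by
    intro ξ
    set η := (star a) ξ with hη
    have happ : (e * star a - star a) ξ = e η - η := by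
      simp [hη, ContinuousLinearMap.sub_apply, ContinuousLinearMap.mul_apply]
    rw [happ]
    have he' : ‖e η‖ ≤ ‖η‖ := by
      calc ‖e η‖ ≤ ‖e‖ * ‖η‖ := e.le_opNorm η
        _ ≤ 1 * ‖η‖ := by gcongr
        _ = ‖η‖ := one_mul _
    have h1 : ‖e η - η‖ ^ 2 ≤ 2 * RCLike.re ⟪η - e η, η⟫ := by
      have hns := @norm_sub_sq ℂ _ _ _ _ (e η) η
      have hsl : RCLike.re ⟪η - e η, η⟫ = ‖η‖ ^ 2 - RCLike.re ⟪e η, η⟫ := by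
        rw [inner_sub_left, map_sub, inner_self_eq_norm_sq]
      have hsq : ‖e η‖ ^ 2 ≤ ‖η‖ ^ 2 := by
        have := norm_nonneg (e η); nlinarith
      rw [hns]; rw [hsl]; nlinarith
    have hmv : ⟪η - e η, η⟫ = ⟪((a - a * e) * star a) ξ, ξ⟫ := by
      rw [hη, ContinuousLinearMap.star_eq_adjoint, ContinuousLinearMap.adjoint_inner_right]
      congr 1
      simp [map_sub, ContinuousLinearMap.mul_apply, ContinuousLinearMap.sub_apply,
        ContinuousLinearMap.star_eq_adjoint]
    have h2 : RCLike.re ⟪η - e η, η⟫ ≤ ‖a‖ * ‖a * e - a‖ * ‖ξ‖ ^ 2 := by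
      rw [hmv]
      calc RCLike.re ⟪((a - a * e) * star a) ξ, ξ⟫
          ≤ ‖(⟪((a - a * e) * star a) ξ, ξ⟫ : ℂ)‖ := RCLike.re_le_norm _
        _ ≤ ‖((a - a * e) * star a) ξ‖ * ‖ξ‖ := norm_inner_le_norm _ _
        _ ≤ (‖a - a * e‖ * ‖star a‖ * ‖ξ‖) * ‖ξ‖ := by
            gcongr
            calc ‖((a - a * e) * star a) ξ‖ ≤ ‖(a - a * e) * star a‖ * ‖ξ‖ :=
                  ContinuousLinearMap.le_opNorm _ _
              _ ≤ ‖a - a * e‖ * ‖star a‖ * ‖ξ‖ := by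
                  gcongr; exact norm_mul_le _ _
        _ = ‖a‖ * ‖a * e - a‖ * ‖ξ‖ ^ 2 := by
            rw [norm_star, norm_sub_rev]; ring
    nlinarith
  have hb : ‖e * star a - star a‖ ≤ Real.sqrt (2 * ‖a‖ * ‖a * e - a‖) := by
    refine ContinuousLinearMap.opNorm_le_bound _ (Real.sqrt_nonneg _) (fun ξ => ?_)
    have h0 : ‖(e * star a - star a) ξ‖ = Real.sqrt (‖(e * star a - star a) ξ‖ ^ 2) :=
      (Real.sqrt_sq (norm_nonneg _)).symm
    rw [h0]
    calc Real.sqrt (‖(e * star a - star a) ξ‖ ^ 2)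
        ≤ Real.sqrt ((2 * ‖a‖ * ‖a * e - a‖) * ‖ξ‖ ^ 2) := Real.sqrt_le_sqrt (hpt ξ)
      _ = Real.sqrt (2 * ‖a‖ * ‖a * e - a‖) * ‖ξ‖ := by
          rw [Real.sqrt_mul hK, Real.sqrt_sq (norm_nonneg _)]
  have hsb : star (a * star e - a) = e * star a - star a := by
    simp [star_sub, star_mul]
  have hnorm : ‖a * star e - a‖ = ‖e * star a - star a‖ := by
    rw [← hsb, norm_star]
  rw [hnorm]
  calc ‖e * star a - star a‖ ^ 2 ≤ Real.sqrt (2 * ‖a‖ * ‖a * e - a‖) ^ 2 := by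
        have := (norm_nonneg (e * star a - star a)); nlinarith
    _ = 2 * ‖a‖ * ‖a * e - a‖ := Real.sq_sqrt hK

/-- Concrete form of the left ideal envelope (§2): if `A ⊆ B(H)` is a norm-closed subalgebra
with a right contractive approximate identity, `T` is the triple system it generates, and
`C` is the closed linear span of `T T*`, then `C` is a C*-subalgebra of `B(H)`, `T ⊆ C`, and
`T` is a closed left ideal of `C` containing `A`. -/
theorem stmt6 {H : Type*} [NormedAddCommGroup H] [InnerProductSpace ℂ H] [CompleteSpace H]
    {ι : Type*} [Preorder ι] [IsDirected ι (· ≤ ·)] [Nonempty ι]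
    (A : NonUnitalSubalgebra ℂ (H →L[ℂ] H)) (hA : IsClosed (A : Set (H →L[ℂ] H)))
    (e : ι → H →L[ℂ] H) (heA : ∀ i, e i ∈ A) (he : ∀ i, ‖e i‖ ≤ 1)
    (hrcai : ∀ a ∈ A, Tendsto (fun i => ‖a * e i - a‖) atTop (𝓝 0))
    (T : Submodule ℂ (H →L[ℂ] H)) (hTc : IsClosed (T : Set (H →L[ℂ] H)))
    (hAT : (A : Set (H →L[ℂ] H)) ⊆ T)
    (hTtriple : ∀ x ∈ T, ∀ y ∈ T, ∀ z ∈ T, x * star y * z ∈ T)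
    (hTmin : ∀ S : Submodule ℂ (H →L[ℂ] H), IsClosed (S : Set (H →L[ℂ] H)) →
      (A : Set (H →L[ℂ] H)) ⊆ S →
      (∀ x ∈ S, ∀ y ∈ S, ∀ z ∈ S, x * star y * z ∈ S) → T ≤ S)
    (C : Set (H →L[ℂ] H))
    (hC : C = closure (Submodule.span ℂ
      {z : H →L[ℂ] H | ∃ x ∈ T, ∃ y ∈ T, z = x * star y} : Set (H →L[ℂ] H))) :
    (∀ c ∈ C, ∀ d ∈ C, c * d ∈ C) ∧
      (∀ c ∈ C, star c ∈ C) ∧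
      (T : Set (H →L[ℂ] H)) ⊆ C ∧
      (∀ c ∈ C, ∀ x ∈ T, c * x ∈ T) := by
  haveI : (atTop : Filter ι).NeBot := atTop_neBot_iff.mpr ⟨‹_›, ‹_›⟩
  subst hC
  set gens : Set (H →L[ℂ] H) := {z : H →L[ℂ] H | ∃ x ∈ T, ∃ y ∈ T, z = x * star y} with hgens
  set S0 : Submodule ℂ (H →L[ℂ] H) := Submodule.span ℂ gens with hS0
  -- Step 1 : every x ∈ T satisfies x e_i → x.
  have hS' : IsClosed {x : H →L[ℂ] H | Tendsto (fun i => ‖x * e i - x‖) atTop (𝓝 0)} := by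
    apply isClosed_of_closure_subset
    intro x hx
    rw [Set.mem_setOf_eq, Metric.tendsto_nhds]
    intro ε hε
    obtain ⟨y, hy, hxy⟩ := Metric.mem_closure_iff.mp hx (ε / 3) (by positivity)
    rw [Set.mem_setOf_eq] at hy
    have h2 : ∀ᶠ i in atTop, ‖y * e i - y‖ < ε / 3 := by
      have := (Metric.tendsto_nhds.mp hy) (ε / 3) (by positivity)
      filter_upwards [this] with i hi
      simpa [Real.dist_eq, abs_of_nonneg (norm_nonneg _)] using hi
    filter_upwards [h2] with i hi
    rw [Real.dist_eq, sub_zero, abs_of_nonneg (norm_nonneg _)]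
    have hd : ‖x - y‖ < ε / 3 := by rwa [← dist_eq_norm]
    have hdec : x * e i - x = (x - y) * e i + (y * e i - y) + (y - x) := by
      rw [sub_mul]; abel
    calc ‖x * e i - x‖ = ‖(x - y) * e i + (y * e i - y) + (y - x)‖ := by rw [hdec]
      _ ≤ ‖(x - y) * e i‖ + ‖y * e i - y‖ + ‖y - x‖ := norm_add₃_le
      _ ≤ ‖x - y‖ * 1 + ‖y * e i - y‖ + ‖x - y‖ := by
          gcongr
          · calc ‖(x - y) * e i‖ ≤ ‖x - y‖ * ‖e i‖ := norm_mul_le _ _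
              _ ≤ ‖x - y‖ * 1 := by gcongr; exact he i
          · exact (norm_sub_rev y x).le
      _ < ε / 3 * 1 + ε / 3 + ε / 3 := by gcongr
      _ = ε := by ring
  have hxe : ∀ x ∈ T, Tendsto (fun i => ‖x * e i - x‖) atTop (𝓝 0) := by
    set S' : Submodule ℂ (H →L[ℂ] H) :=
      { carrier := {x | Tendsto (fun i => ‖x * e i - x‖) atTop (𝓝 0)}
        zero_mem' := by simpa using (tendsto_const_nhds : Tendsto (fun _ : ι => (0:ℝ)) atTop _)
        add_mem' := by
          intro a b ha hb
          refine squeeze_zero (fun i => norm_nonneg _) (fun i => ?_) (by simpa using ha.add hb)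
          have : (a + b) * e i - (a + b) = (a * e i - a) + (b * e i - b) := by
            rw [add_mul]; abel
          rw [this]; exact norm_add_le _ _
        smul_mem' := by
          intro c a ha
          have hkey : ∀ i, ‖(c • a) * e i - c • a‖ = ‖c‖ * ‖a * e i - a‖ := by
            intro i; rw [smul_mul_assoc, ← smul_sub, norm_smul]
          simp only [Set.mem_setOf_eq, hkey]
          simpa using ha.const_mul ‖c‖ } with hS'def
    have hmin := hTmin (T ⊓ S') (by rw [Submodule.coe_inf]; exact hTc.inter hS')
      (fun a ha => Submodule.mem_inf.mpr ⟨hAT ha, hrcai a ha⟩)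
      (by
        intro x hx y hy z hz
        obtain ⟨hxT, -⟩ := Submodule.mem_inf.mp hx
        obtain ⟨hyT, -⟩ := Submodule.mem_inf.mp hy
        obtain ⟨hzT, hze⟩ := Submodule.mem_inf.mp hz
        refine Submodule.mem_inf.mpr ⟨hTtriple x hxT y hyT z hzT, ?_⟩
        refine squeeze_zero (fun i => norm_nonneg _) (fun i => ?_)
          (by simpa using hze.const_mul ‖x * star y‖)
        have : x * star y * z * e i - x * star y * z = (x * star y) * (z * e i - z) := by
          rw [mul_sub, mul_assoc]
        rw [this]; exact norm_mul_le _ _)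
    intro x hx
    exact (Submodule.mem_inf.mp (hmin hx)).2
  -- Membership facts about S0
  have hgen_mem : ∀ x ∈ T, ∀ y ∈ T, x * star y ∈ S0 := fun x hx y hy =>
    Submodule.subset_span ⟨x, hx, y, hy, rfl⟩
  -- S0 is closed under multiplication
  have hmul0 : ∀ s ∈ S0, ∀ t ∈ S0, s * t ∈ S0 := by
    intro s hs
    induction hs using Submodule.span_induction with
    | mem u hu =>
      obtain ⟨x, hx, y, hy, rfl⟩ := hu
      intro t ht
      induction ht using Submodule.span_induction with
      | mem v hv =>
        obtain ⟨z, hz, w, hw, rfl⟩ := hv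
        rw [← mul_assoc]
        exact hgen_mem _ (hTtriple x hx y hy z hz) _ hw
      | zero => simpa using S0.zero_mem
      | add v w _ _ hv hw => rw [mul_add]; exact S0.add_mem hv hw
      | smul c v _ hv => rw [mul_smul_comm]; exact S0.smul_mem c hv
    | zero => intro t ht; simpa using S0.zero_mem
    | add u v _ _ hu hv => intro t ht; rw [add_mul]; exact S0.add_mem (hu t ht) (hv t ht)
    | smul c u _ hu => intro t ht; rw [smul_mul_assoc]; exact S0.smul_mem c (hu t ht)
  -- S0 is star-closed
  have hstar0 : ∀ s ∈ S0, star s ∈ S0 := by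
    intro s hs
    induction hs using Submodule.span_induction with
    | mem u hu =>
      obtain ⟨x, hx, y, hy, rfl⟩ := hu
      rw [star_mul, star_star]
      exact hgen_mem _ hy _ hx
    | zero => simpa using S0.zero_mem
    | add u v _ _ hu hv => rw [star_add]; exact S0.add_mem hu hv
    | smul c u _ hu => rw [star_smul]; exact S0.smul_mem _ hu
  -- S0 · T ⊆ T
  have hS0T : ∀ s ∈ S0, ∀ x ∈ T, s * x ∈ T := by
    intro s hs
    induction hs using Submodule.span_induction with
    | mem u hu =>
      obtain ⟨x, hx, y, hy, rfl⟩ := hu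
      intro z hz
      exact hTtriple x hx y hy z hz
    | zero => intro z hz; simpa using T.zero_mem
    | add u v _ _ hu hv => intro z hz; rw [add_mul]; exact T.add_mem (hu z hz) (hv z hz)
    | smul c u _ hu => intro z hz; rw [smul_mul_assoc]; exact T.smul_mem c (hu z hz)
  refine ⟨?_, ?_, ?_, ?_⟩
  · -- multiplication
    intro c hc d hd
    obtain ⟨u, hu, hul⟩ := mem_closure_iff_seq_limit.mp hc
    obtain ⟨v, hv, hvl⟩ := mem_closure_iff_seq_limit.mp hd
    exact mem_closure_of_tendsto (hul.mul hvl)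
      (Filter.Eventually.of_forall fun n => hmul0 _ (hu n) _ (hv n))
  · -- star
    intro c hc
    obtain ⟨u, hu, hul⟩ := mem_closure_iff_seq_limit.mp hc
    exact mem_closure_of_tendsto hul.star
      (Filter.Eventually.of_forall fun n => hstar0 _ (hu n))
  · -- T ⊆ C
    intro x hx
    have hmem : ∀ i, x * star (e i) ∈ (S0 : Set (H →L[ℂ] H)) := fun i =>
      hgen_mem x hx (e i) (hAT (heA i))
    have htend : Tendsto (fun i => x * star (e i)) atTop (𝓝 x) := by
      rw [tendsto_iff_norm_sub_tendsto_zero]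
      have hb : ∀ i, ‖x * star (e i) - x‖ ≤ Real.sqrt (2 * ‖x‖ * ‖x * e i - x‖) := by
        intro i
        have h1 := star_approx x (e i) (he i)
        have h2 : ‖x * star (e i) - x‖ = Real.sqrt (‖x * star (e i) - x‖ ^ 2) :=
          (Real.sqrt_sq (norm_nonneg _)).symm
        rw [h2]
        exact Real.sqrt_le_sqrt h1
      refine squeeze_zero (fun i => norm_nonneg _) hb ?_
      have h1 := (hxe x hx).const_mul (2 * ‖x‖)
      rw [mul_zero] at h1
      have hsq := (Real.continuous_sqrt.tendsto 0).comp h1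
      rw [Real.sqrt_zero] at hsq
      exact hsq
    exact mem_closure_of_tendsto htend (Filter.Eventually.of_forall hmem)
  · -- C · T ⊆ T
    intro c hc x hx
    obtain ⟨u, hu, hul⟩ := mem_closure_iff_seq_limit.mp hc
    have : Tendsto (fun n => u n * x) atTop (𝓝 (c * x)) := hul.mul tendsto_const_nhds
    exact hTc.mem_of_tendsto this (Filter.Eventually.of_forall fun n => hS0T _ (hu n) x hx)
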